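/- For every w ∈ (0,1) such that T(w) < ∞, the deflection angle θ(w) is finite and T(w) < (π − θ(w))/w. -/

import Mathlib

open MeasureTheory Set
open scoped ENNReal

noncomputable section

/-- The integral `∫_{r₀}^∞ r^{-2} (1 - 2W(r) - w²r^{-2})^{-1/2} dr ∈ [0,∞]` appearing in
the definition of the deflection angle `θ(w) = π - 2w·(this integral)`. -/
def thetaInt (W : ℝ → ℝ) (rz w : ℝ) : ℝ≥0∞ :=
  ∫⁻ r in Set.Ioi rz, ENNReal.ofReal (1 / (r ^ 2 * Real.sqrt (1 - 2 * W r - w ^ 2 / r ^ 2)))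

/-- The deflection angle `θ(w) = π - 2w ∫_{r₀}^∞ r^{-2}(1-2W(r)-w²r^{-2})^{-1/2} dr`
(meaningful when the integral is finite). -/
def deflAngle (W : ℝ → ℝ) (rz w : ℝ) : ℝ :=
  Real.pi - 2 * w * (thetaInt W rz w).toReal

/-- The collision time `T(w) = 2 ∫_{r₀}^1 (1 - 2W(r) - w²r^{-2})^{-1/2} dr ∈ [0,∞]`. -/
def collTime (W : ℝ → ℝ) (rz w : ℝ) : ℝ≥0∞ :=
  2 * ∫⁻ r in Set.Ioo rz 1, ENNReal.ofReal (1 / Real.sqrt (1 - 2 * W r - w ^ 2 / r ^ 2))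

/-- `rz` is the largest zero in `(0,1)` of `r ↦ 1 - 2W(r) - w²r^{-2}`. -/
def IsLargestZero (W : ℝ → ℝ) (w rz : ℝ) : Prop :=
  rz ∈ Set.Ioo (0 : ℝ) 1 ∧ 1 - 2 * W rz - w ^ 2 / rz ^ 2 = 0 ∧
    ∀ r, rz < r → 1 - 2 * W r - w ^ 2 / r ^ 2 ≠ 0

/-- For every `w ∈ (0,1)` with finite collision time `T(w) < ∞`, the
deflection angle `θ(w)` is finite and `T(w) < (π - θ(w))/w`. -/
theorem collision_time_lt_deflection_bound
    (W : ℝ → ℝ) (hWc : ContinuousOn W (Set.Ioi 0)) (hW1 : ∀ r, 1 ≤ r → W r = 0)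
    (hWlim : ∀ ε > (0 : ℝ), ∃ δ > (0 : ℝ), ∀ r ∈ Set.Ioo (0 : ℝ) δ, -ε < r ^ 2 * W r)
    (r₀ : ℝ → ℝ) (hr₀ : ∀ w ∈ Set.Ioo (0 : ℝ) 1, IsLargestZero W w (r₀ w))
    (w : ℝ) (hw : w ∈ Set.Ioo (0 : ℝ) 1)
    (hT : collTime W (r₀ w) w ≠ ⊤) :
    thetaInt W (r₀ w) w ≠ ⊤ ∧
      (collTime W (r₀ w) w).toReal < (Real.pi - deflAngle W (r₀ w) w) / w := by
  obtain ⟨hw0, hw1⟩ := hw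
  set rz := r₀ w with hrzdef
  obtain ⟨⟨hrz0, hrz1⟩, -, -⟩ := hr₀ w ⟨hw0, hw1⟩
  set f : ℝ → ℝ := fun r => 1 - 2 * W r - w ^ 2 / r ^ 2 with hf
  set g : ℝ → ℝ≥0∞ := fun r => ENNReal.ofReal (1 / (r ^ 2 * Real.sqrt (f r))) with hg
  set h : ℝ → ℝ≥0∞ := fun r => ENNReal.ofReal (1 / Real.sqrt (f r)) with hh
  have hH : collTime W rz w = 2 * ∫⁻ r in Set.Ioo rz 1, h r := rfl
  set H : ℝ≥0∞ := ∫⁻ r in Set.Ioo rz 1, h r with hHdef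
  have hHne : H ≠ ⊤ := by
    intro htop
    apply hT
    rw [hH, htop, ENNReal.mul_top (by norm_num)]
  -- split thetaInt
  have hsplit : thetaInt W rz w
      = (∫⁻ r in Set.Ioo rz 1, g r) + ∫⁻ r in Set.Ici 1, g r := by
    rw [thetaInt, ← Set.Ioo_union_Ici_eq_Ioi hrz1,
      lintegral_union measurableSet_Ici (by
        intro s hs1 hs2 x hx
        have h1 := (hs1 hx).2
        have h2 := hs2 hx
        exact absurd h2 (not_le.mpr h1))]
  set A : ℝ≥0∞ := ∫⁻ r in Set.Ioo rz 1, g r with hAdef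
  set B : ℝ≥0∞ := ∫⁻ r in Set.Ici 1, g r with hBdef
  -- H ≤ A (pointwise, since r² < 1 on (rz,1))
  have hHA : H ≤ A := by
    refine setLIntegral_mono' measurableSet_Ioo ?_
    intro r hr
    apply ENNReal.ofReal_le_ofReal
    rcases le_or_gt (Real.sqrt (f r)) 0 with hs | hs
    · have : Real.sqrt (f r) = 0 := le_antisymm hs (Real.sqrt_nonneg _)
      simp [this]
    · have hr0 : 0 < r := lt_trans hrz0 hr.1
      have hr2 : 0 < r ^ 2 := by positivity
      have hr2le : r ^ 2 ≤ 1 := by nlinarith [hr.2, hr0.le]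
      rw [div_le_div_iff₀ hs (by positivity)]
      nlinarith [hs]
  -- A finite : g ≤ (1/rz²)·h on (rz,1)
  have hAfin : A ≠ ⊤ := by
    have hb : A ≤ ENNReal.ofReal (1 / rz ^ 2) * H := by
      calc A ≤ ∫⁻ r in Set.Ioo rz 1, ENNReal.ofReal (1 / rz ^ 2) * h r := by
              refine setLIntegral_mono' measurableSet_Ioo ?_
              intro r hr
              rw [hh, ← ENNReal.ofReal_mul (by positivity)]
              apply ENNReal.ofReal_le_ofReal
              rcases le_or_gt (Real.sqrt (f r)) 0 with hs | hs
              · have : Real.sqrt (f r) = 0 := le_antisymm hs (Real.sqrt_nonneg _)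
                simp [this]
              · have hr0 : 0 < r := lt_trans hrz0 hr.1
                have hrz2 : 0 < rz ^ 2 := by positivity
                have hle : rz ^ 2 ≤ r ^ 2 := by nlinarith [hr.1, hrz0.le]
                rw [div_mul_div_comm, one_mul, div_le_div_iff₀ (by positivity) (by positivity)]
                nlinarith [hs]
        _ = ENNReal.ofReal (1 / rz ^ 2) * H := lintegral_const_mul' _ _ ENNReal.ofReal_ne_top
    exact ne_top_of_le_ne_top (ENNReal.mul_ne_top ENNReal.ofReal_ne_top hHne) hb
  -- on Ici 1, f r = 1 - w²/r² ∈ [1-w², 1]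
  have hfIci : ∀ r : ℝ, 1 ≤ r → f r = 1 - w ^ 2 / r ^ 2 := by
    intro r hr; simp [hf, hW1 r hr]
  -- B finite
  have hBfin : B ≠ ⊤ := by
    have hI : IntegrableOn (fun r : ℝ => (1 / Real.sqrt (1 - w ^ 2)) * (1 / r ^ 2))
        (Set.Ici 1) := by
      have : IntegrableOn (fun r : ℝ => r ^ (-2 : ℝ)) (Set.Ioi 1) :=
        integrableOn_Ioi_rpow_of_lt (by norm_num) one_pos
      have h2 : IntegrableOn (fun r : ℝ => 1 / r ^ 2) (Set.Ioi 1) := by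
        refine this.congr_fun (fun r hr => ?_) measurableSet_Ioi
        have hr0 : (0:ℝ) < r := lt_trans one_pos hr
        beta_reduce
        rw [Real.rpow_neg hr0.le, ← Real.rpow_natCast r 2]
        norm_num
      have h3 : IntegrableOn (fun r : ℝ => 1 / r ^ 2) (Set.Ici 1) := by
        rwa [integrableOn_Ici_iff_integrableOn_Ioi]
      exact h3.const_mul _
    have hb : B ≤ ∫⁻ r in Set.Ici 1,
        ENNReal.ofReal ((1 / Real.sqrt (1 - w ^ 2)) * (1 / r ^ 2)) := by
      refine setLIntegral_mono' measurableSet_Ici ?_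
      intro r hr
      apply ENNReal.ofReal_le_ofReal
      have hr0 : (0:ℝ) < r := lt_of_lt_of_le one_pos hr
      have hfr : f r = 1 - w ^ 2 / r ^ 2 := hfIci r hr
      have hwlt : (0:ℝ) < 1 - w ^ 2 := by nlinarith
      have hr1 : (1:ℝ) ≤ r := hr
      have hr2 : (1:ℝ) ≤ r ^ 2 := by nlinarith
      have hfge : 1 - w ^ 2 ≤ f r := by
        rw [hfr]
        have : w ^ 2 / r ^ 2 ≤ w ^ 2 := by
          apply div_le_of_le_mul₀ (by positivity) (by positivity)
          nlinarith [mul_le_mul_of_nonneg_left hr2 (sq_nonneg w)]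
        linarith
      have hs : Real.sqrt (1 - w ^ 2) ≤ Real.sqrt (f r) := Real.sqrt_le_sqrt hfge
      have hspos : 0 < Real.sqrt (1 - w ^ 2) := Real.sqrt_pos.mpr hwlt
      have hfpos : 0 < f r := lt_of_lt_of_le hwlt hfge
      have hsfr : 0 < Real.sqrt (f r) := Real.sqrt_pos.mpr hfpos
      rw [div_mul_div_comm, one_mul,
        div_le_div_iff₀ (mul_pos (by positivity) hsfr) (mul_pos hspos (by positivity))]
      nlinarith [mul_le_mul_of_nonneg_left hs (sq_nonneg r)]
    exact ne_top_of_le_ne_top hI.lintegral_lt_top.ne hb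
  -- B positive
  have hBpos : 0 < B := by
    have hsub : Set.Ioo (1:ℝ) 2 ⊆ Set.Ici 1 := fun x hx => hx.1.le
    have hb : ENNReal.ofReal (1/4) * volume (Set.Ioo (1:ℝ) 2) ≤ B := by
      calc ENNReal.ofReal (1/4) * volume (Set.Ioo (1:ℝ) 2)
          = ∫⁻ _ in Set.Ioo (1:ℝ) 2, ENNReal.ofReal (1/4) := (setLIntegral_const _ _).symm
        _ ≤ ∫⁻ r in Set.Ioo (1:ℝ) 2, g r := by
            refine setLIntegral_mono' measurableSet_Ioo ?_
            intro r hr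
            apply ENNReal.ofReal_le_ofReal
            have hr1 : (1:ℝ) < r := hr.1
            have hr0 : (0:ℝ) < r := lt_trans one_pos hr1
            have hfr : f r = 1 - w ^ 2 / r ^ 2 := hfIci r hr1.le
            have hfle1 : f r ≤ 1 := by
              rw [hfr]; have : 0 ≤ w ^ 2 / r ^ 2 := by positivity
              linarith
            have hfpos : 0 < f r := by
              rw [hfr]
              have h1 : w ^ 2 / r ^ 2 < 1 := by
                rw [div_lt_one (by positivity)]; nlinarith
              linarith
            have hs1 : Real.sqrt (f r) ≤ 1 := by
              rw [show (1:ℝ) = Real.sqrt 1 by simp]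
              exact Real.sqrt_le_sqrt hfle1
            have hspos : 0 < Real.sqrt (f r) := Real.sqrt_pos.mpr hfpos
            have hr2 : r ^ 2 ≤ 4 := by nlinarith [hr.2]
            rw [div_le_div_iff₀ (by norm_num) (by positivity)]
            nlinarith
        _ ≤ B := lintegral_mono_set hsub
    refine lt_of_lt_of_le ?_ hb
    rw [Real.volume_Ioo]
    refine ENNReal.mul_pos ?_ ?_
    · exact (ENNReal.ofReal_pos.mpr (by norm_num)).ne'
    · exact (ENNReal.ofReal_pos.mpr (by norm_num)).ne'
  have hBne : B ≠ 0 := hBpos.ne'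
  have hThetafin : thetaInt W rz w ≠ ⊤ := by
    rw [hsplit]; exact ENNReal.add_ne_top.mpr ⟨hAfin, hBfin⟩
  refine ⟨hThetafin, ?_⟩
  -- strict inequality in ℝ≥0∞
  have hkey : collTime W rz w < 2 * thetaInt W rz w := by
    calc collTime W rz w = 2 * H := hH
      _ < 2 * H + 2 * B := ENNReal.lt_add_right
          (ENNReal.mul_ne_top (by norm_num) hHne)
          (by simp [hBne])
      _ ≤ 2 * A + 2 * B := by
          gcongr
      _ = 2 * thetaInt W rz w := by rw [hsplit, mul_add]
  have h2T : (2 : ℝ≥0∞) * thetaInt W rz w ≠ ⊤ := ENNReal.mul_ne_top (by norm_num) hThetafin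
  have := (ENNReal.toReal_lt_toReal hT h2T).mpr hkey
  rw [ENNReal.toReal_mul] at this
  have hrhs : (Real.pi - deflAngle W rz w) / w = 2 * (thetaInt W rz w).toReal := by
    rw [deflAngle]
    field_simp
    ring
  rw [hrhs]
  simpa using this


end
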